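/- Let J be an adapted complex structure on a finite simple graph G, and let u, v be adjacent vertices of G. The following are equivalent: (i) the edge joining u and v is distinguished; (ii) [Ju, v] + [u, Jv] = 0 in 𝔫_G; (iii) [Ju, v] = 0 and [u, Jv] = 0 in 𝔫_G. -/
import Mathlib


/-!  Framework: the 2-step nilpotent Lie algebra `𝔫_G` associated to a finite simple
graph `G` (Dani–Mainkar construction), and adapted complex structures on it. -/

open scoped BigOperators

namespace GraphLie

variable {V : Type*} [Fintype V] [LinearOrder V]

/-- The underlying real vector space of the Lie algebra `𝔫_G` associated to a graph `G`:
real-valued functions on its basis `V ⊕ G.edgeSet` (vertices and edges). -/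
abbrev Niln (G : SimpleGraph V) : Type _ := (V ⊕ G.edgeSet) → ℝ

variable (G : SimpleGraph V) [DecidableRel G.Adj]

/-- The basis vector of `𝔫_G` corresponding to the vertex `v`. -/
noncomputable def vtx (v : V) : Niln G := Pi.single (Sum.inl v) 1

/-- The basis vector of `𝔫_G` corresponding to the edge `e`. -/
noncomputable def edg (e : G.edgeSet) : Niln G := Pi.single (Sum.inr e) 1

/-- The basis vector of `𝔫_G` corresponding to a vertex or an edge. -/
noncomputable def basisVec (b : V ⊕ G.edgeSet) : Niln G := Pi.single b 1

/-- The bracket of two vertex generators: for adjacent vertices `i < j` (with respect to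
the chosen labeling of the vertices) `[v_i, v_j] = e_{i,j}` and `[v_j, v_i] = -e_{i,j}`;
non-adjacent vertices commute. -/
noncomputable def bracketVtx (i j : V) : Niln G :=
  if h : G.Adj i j then
    (if i < j then edg G ⟨s(i, j), G.mem_edgeSet.mpr h⟩
     else - edg G ⟨s(i, j), G.mem_edgeSet.mpr h⟩)
  else 0

/-- The Lie bracket of `𝔫_G`, extended bilinearly from the generators; all the
edge generators are central. -/
noncomputable def bracket (x y : Niln G) : Niln G :=
  ∑ i : V, ∑ j : V, (x (Sum.inl i) * y (Sum.inl j)) • bracketVtx G i j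

/-- An adapted complex structure on the graph `G`: a linear endomorphism `J` of `𝔫_G`
with `J ∘ J = -id`, whose Nijenhuis tensor vanishes, and which sends each basis vector
(vertex or edge) to plus or minus a basis vector. -/
structure AdaptedCS : Type _ where
  J : Niln G →ₗ[ℝ] Niln G
  j_squared : ∀ x, J (J x) = -x
  integrable : ∀ x y,
    bracket G x y + J (bracket G (J x) y + bracket G x (J y)) - bracket G (J x) (J y) = 0
  adapted : ∀ b : V ⊕ G.edgeSet,
    (∃ b', J (basisVec G b) = basisVec G b') ∨ (∃ b', J (basisVec G b) = - basisVec G b')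

variable {G}

/-- An edge of `G` joining vertices `v` and `w` is distinguished if `Jv = w` or `Jw = v`. -/
def AdaptedCS.Distinguished (Jc : AdaptedCS G) (e : G.edgeSet) : Prop :=
  ∃ v w : V, (e : Sym2 V) = s(v, w) ∧
    (Jc.J (vtx G v) = vtx G w ∨ Jc.J (vtx G w) = vtx G v)

lemma bracket_vtx_vtx (a b : V) : bracket G (vtx G a) (vtx G b) = bracketVtx G a b := by
  unfold bracket vtx
  simp [Pi.single_apply, ite_smul, mul_ite, Finset.sum_ite_eq]

lemma bracket_smul_left (c : ℝ) (x y : Niln G) :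
    bracket G (c • x) y = c • bracket G x y := by
  unfold bracket
  simp [Finset.smul_sum, mul_assoc, smul_smul]

lemma bracket_smul_right (c : ℝ) (x y : Niln G) :
    bracket G x (c • y) = c • bracket G x y := by
  unfold bracket
  rw [Finset.smul_sum]
  refine Finset.sum_congr rfl fun i _ => ?_
  rw [Finset.smul_sum]
  refine Finset.sum_congr rfl fun j _ => ?_
  rw [smul_smul, Pi.smul_apply, smul_eq_mul]
  ring_nf

lemma bracket_edg_left (e : G.edgeSet) (y : Niln G) : bracket G (edg G e) y = 0 := by
  unfold bracket edg
  simp [Pi.single_apply]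

lemma bracket_edg_right (x : Niln G) (e : G.edgeSet) : bracket G x (edg G e) = 0 := by
  unfold bracket edg
  simp [Pi.single_apply]

lemma bracket_neg_right (x y : Niln G) : bracket G x (-y) = - bracket G x y := by
  have := bracket_smul_right (-1 : ℝ) x y
  simpa using this

lemma bracketVtx_of_not_adj {a b : V} (h : ¬ G.Adj a b) : bracketVtx G a b = 0 := by
  unfold bracketVtx; rw [dif_neg h]

lemma bracketVtx_form {a b : V} (h : G.Adj a b) :
    ∃ ε : ℝ, (ε = 1 ∨ ε = -1) ∧
      bracketVtx G a b = ε • edg G ⟨s(a, b), G.mem_edgeSet.mpr h⟩ := by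
  unfold bracketVtx
  rw [dif_pos h]
  split
  · exact ⟨1, Or.inl rfl, by simp⟩
  · exact ⟨-1, Or.inr rfl, by simp⟩

lemma edg_apply (e e' : G.edgeSet) : edg G e (Sum.inr e') = if e' = e then 1 else 0 := by
  unfold edg; rw [Pi.single_apply]; simp

lemma smul_edg_add_smul_edg {c d : ℝ} {e1 e2 : G.edgeSet} (hc : c ≠ 0)
    (h : c • edg G e1 + d • edg G e2 = 0) : e1 = e2 ∧ d = -c := by
  have h1 := congrFun h (Sum.inr e1)
  simp [edg_apply] at h1
  by_cases he : e1 = e2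
  · subst he
    simp at h1
    exact ⟨rfl, by linarith⟩
  · rw [if_neg he] at h1
    simp at h1
    exact absurd h1 hc

lemma adapted' (Jc : AdaptedCS G) (b : V ⊕ G.edgeSet) :
    ∃ (ε : ℝ) (b' : V ⊕ G.edgeSet), (ε = 1 ∨ ε = -1) ∧
      Jc.J (basisVec G b) = ε • basisVec G b' := by
  rcases Jc.adapted b with ⟨b', hb⟩ | ⟨b', hb⟩
  · exact ⟨1, b', Or.inl rfl, by simpa using hb⟩
  · exact ⟨-1, b', Or.inr rfl, by simpa using hb⟩

lemma vtx_eq_basis (a : V) : vtx G a = basisVec G (Sum.inl a) := rfl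

lemma edg_eq_basis (e : G.edgeSet) : edg G e = basisVec G (Sum.inr e) := rfl

lemma nij (Jc : AdaptedCS G) (u v : V)
    (hii : bracket G (Jc.J (vtx G u)) (vtx G v) + bracket G (vtx G u) (Jc.J (vtx G v)) = 0) :
    bracketVtx G u v = bracket G (Jc.J (vtx G u)) (Jc.J (vtx G v)) := by
  have h := Jc.integrable (vtx G u) (vtx G v)
  rw [hii, map_zero, add_zero, bracket_vtx_vtx, sub_eq_zero] at h
  exact h

/-- The crucial fact: `Ju = ε • vtx a` with `a = u` is impossible. -/
lemma j_vtx_ne_self (Jc : AdaptedCS G) (u : V) {ε : ℝ} (hε : ε = 1 ∨ ε = -1)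
    (hJ : Jc.J (vtx G u) = ε • vtx G u) : False := by
  have h2 := Jc.j_squared (vtx G u)
  rw [hJ, map_smul, hJ, smul_smul] at h2
  have hε2 : ε * ε = 1 := by rcases hε with h | h <;> rw [h] <;> norm_num
  rw [hε2, one_smul] at h2
  have := congrFun h2 (Sum.inl u)
  simp [vtx, Pi.single_apply] at this
  linarith

lemma bracket_neg_left (x y : Niln G) : bracket G (-x) y = - bracket G x y := by
  have := bracket_smul_left (-1 : ℝ) x y
  simpa using this

lemma key (Jc : AdaptedCS G) (u v : V) (h : G.Adj u v)
    (hii : bracket G (Jc.J (vtx G u)) (vtx G v) + bracket G (vtx G u) (Jc.J (vtx G v)) = 0) :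
    (Jc.J (vtx G u) = vtx G v ∨ Jc.J (vtx G v) = vtx G u) ∧
      bracket G (Jc.J (vtx G u)) (vtx G v) = 0 ∧ bracket G (vtx G u) (Jc.J (vtx G v)) = 0 := by
  have hnij := nij Jc u v hii
  have hne : bracketVtx G u v ≠ 0 := by
    obtain ⟨α, hα, hform⟩ := bracketVtx_form h
    rw [hform]
    intro h0
    have := congrFun h0 (Sum.inr ⟨s(u,v), G.mem_edgeSet.mpr h⟩)
    simp [edg_apply] at this
    rcases hα with h1|h1 <;> rw [h1] at this <;> norm_num at this
  obtain ⟨ε, bu, hε, hJu⟩ := adapted' Jc (Sum.inl u)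
  obtain ⟨δ, bv, hδ, hJv⟩ := adapted' Jc (Sum.inl v)
  rw [← vtx_eq_basis] at hJu hJv
  have hεne : ε ≠ 0 := by rcases hε with h1|h1 <;> rw [h1] <;> norm_num
  have hδne : δ ≠ 0 := by rcases hδ with h1|h1 <;> rw [h1] <;> norm_num
  cases bu with
  | inr e =>
    exfalso
    rw [hJu, ← edg_eq_basis, bracket_smul_left, bracket_edg_left, smul_zero] at hnij
    exact hne hnij
  | inl a =>
  cases bv with
  | inr e =>
    exfalso
    rw [hJv, ← edg_eq_basis, bracket_smul_right, bracket_edg_right, smul_zero] at hnij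
    exact hne hnij
  | inl b =>
  rw [← vtx_eq_basis] at hJu hJv
  rw [hJu, hJv, bracket_smul_left, bracket_smul_right, bracket_vtx_vtx,
    bracket_vtx_vtx] at hii
  rw [hJu, hJv, bracket_smul_left, bracket_smul_right, bracket_vtx_vtx, smul_smul] at hnij
  have hbav : bracketVtx G a v = 0 := by
    by_contra hav0
    have hadj_av : G.Adj a v := by
      by_contra hadj; exact hav0 (bracketVtx_of_not_adj hadj)
    by_cases hadj_ub : G.Adj u b
    · obtain ⟨α, hα, hfa⟩ := bracketVtx_form hadj_av
      obtain ⟨β, hβ, hfb⟩ := bracketVtx_form hadj_ub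
      rw [hfa, hfb, smul_smul, smul_smul] at hii
      have hεα : ε * α ≠ 0 := by
        rcases hε with h1|h1 <;> rcases hα with h2|h2 <;> rw [h1,h2] <;> norm_num
      obtain ⟨heq, -⟩ := smul_edg_add_smul_edg hεα hii
      have hsym : s(a, v) = s(u, b) := congrArg Subtype.val heq
      rw [Sym2.eq_iff] at hsym
      rcases hsym with ⟨ha, hv⟩ | ⟨ha, hv⟩
      · rw [ha] at hJu; exact j_vtx_ne_self Jc u hε hJu
      · exact h.ne' hv
    · rw [bracketVtx_of_not_adj hadj_ub, smul_zero, add_zero] at hii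
      exact hav0 (by simpa [smul_eq_zero, hεne] using hii)
  have hbub : bracketVtx G u b = 0 := by
    rw [hbav, smul_zero, zero_add] at hii
    simpa [smul_eq_zero, hδne] using hii
  refine ⟨?_, by rw [hJu, bracket_smul_left, bracket_vtx_vtx, hbav, smul_zero],
    by rw [hJv, bracket_smul_right, bracket_vtx_vtx, hbub, smul_zero]⟩
  have hab : G.Adj a b := by
    by_contra hadj
    rw [bracketVtx_of_not_adj hadj, smul_zero] at hnij
    exact hne hnij
  obtain ⟨α, hα, hfa⟩ := bracketVtx_form h
  obtain ⟨β, hβ, hfb⟩ := bracketVtx_form hab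
  rw [hfa, hfb, smul_smul] at hnij
  have hαne : α ≠ 0 := by rcases hα with h1|h1 <;> rw [h1] <;> norm_num
  have hcomb : α • edg G ⟨s(u,v), G.mem_edgeSet.mpr h⟩ +
      (-(ε * δ * β)) • edg G ⟨s(a,b), G.mem_edgeSet.mpr hab⟩ = 0 := by
    rw [neg_smul, add_neg_eq_zero]; exact hnij
  obtain ⟨heq, -⟩ := smul_edg_add_smul_edg hαne hcomb
  have hsym : s(u, v) = s(a, b) := congrArg Subtype.val heq
  rw [Sym2.eq_iff] at hsym
  rcases hsym with ⟨ha', hb'⟩ | ⟨ha', hb'⟩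
  · exfalso
    rw [← ha'] at hJu
    exact j_vtx_ne_self Jc u hε hJu
  · rw [← ha'] at hJv
    rw [← hb'] at hJu
    have h2 := Jc.j_squared (vtx G u)
    rw [hJu, map_smul, hJv, smul_smul] at h2
    have hεδ : ε * δ = -1 := by
      have := congrFun h2 (Sum.inl u)
      simp [vtx, Pi.single_apply] at this
      linarith
    rcases hε with h1 | h1
    · left; rw [hJu, h1, one_smul]
    · right
      have hδ1 : δ = 1 := by rw [h1] at hεδ; linarith
      rw [hJv, hδ1, one_smul]

lemma forward_dist (Jc : AdaptedCS G) (u v : V) (h : G.Adj u v)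
    (hd : Jc.Distinguished ⟨s(u, v), G.mem_edgeSet.mpr h⟩) :
    bracket G (Jc.J (vtx G u)) (vtx G v) = 0 ∧ bracket G (vtx G u) (Jc.J (vtx G v)) = 0 := by
  obtain ⟨v', w', hs, hJ⟩ := hd
  have hs' : s(u, v) = s(v', w') := hs
  rw [Sym2.eq_iff] at hs'
  have hD : Jc.J (vtx G u) = vtx G v ∨ Jc.J (vtx G v) = vtx G u := by
    rcases hs' with ⟨h1, h2⟩ | ⟨h1, h2⟩ <;> subst h1 <;> subst h2 <;> tauto
  rcases hD with hD | hD
  · have hJv2 : Jc.J (vtx G v) = - vtx G u := by rw [← hD, Jc.j_squared]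
    rw [hD, hJv2, bracket_vtx_vtx, bracket_neg_right, bracket_vtx_vtx,
      bracketVtx_of_not_adj (G.irrefl), bracketVtx_of_not_adj (G.irrefl)]
    exact ⟨rfl, neg_zero⟩
  · have hJu2 : Jc.J (vtx G u) = - vtx G v := by rw [← hD, Jc.j_squared]
    rw [hD, hJu2, bracket_neg_left, bracket_vtx_vtx, bracket_vtx_vtx,
      bracketVtx_of_not_adj (G.irrefl), bracketVtx_of_not_adj (G.irrefl)]
    exact ⟨neg_zero, rfl⟩

theorem statement1' (Jc : AdaptedCS G) (u v : V) (h : G.Adj u v) :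
    (Jc.Distinguished ⟨s(u, v), G.mem_edgeSet.mpr h⟩ ↔
      bracket G (Jc.J (vtx G u)) (vtx G v) + bracket G (vtx G u) (Jc.J (vtx G v)) = 0) ∧
    ((bracket G (Jc.J (vtx G u)) (vtx G v) + bracket G (vtx G u) (Jc.J (vtx G v)) = 0) ↔
      (bracket G (Jc.J (vtx G u)) (vtx G v) = 0 ∧ bracket G (vtx G u) (Jc.J (vtx G v)) = 0)) := by
  constructor
  · constructor
    · intro hd
      obtain ⟨h1, h2⟩ := forward_dist Jc u v h hd
      rw [h1, h2, add_zero]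
    · intro hii
      rcases (key Jc u v h hii).1 with hD | hD
      · exact ⟨u, v, rfl, Or.inl hD⟩
      · exact ⟨u, v, rfl, Or.inr hD⟩
  · constructor
    · intro hii; exact (key Jc u v h hii).2
    · rintro ⟨h1, h2⟩; rw [h1, h2, add_zero]

end GraphLie

namespace GraphLie

/-- Let `J` be an adapted complex structure on a finite simple graph `G`,
and let `u, v` be adjacent vertices of `G`.  The following are equivalent:
(i) the edge joining `u` and `v` is distinguished;
(ii) `[Ju, v] + [u, Jv] = 0` in `𝔫_G`;
(iii) `[Ju, v] = 0` and `[u, Jv] = 0` in `𝔫_G`. -/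
theorem statement1 {V : Type*} [Fintype V] [LinearOrder V] {G : SimpleGraph V}
    [DecidableRel G.Adj] (Jc : AdaptedCS G) (u v : V) (h : G.Adj u v) :
    (Jc.Distinguished ⟨s(u, v), G.mem_edgeSet.mpr h⟩ ↔
      bracket G (Jc.J (vtx G u)) (vtx G v) + bracket G (vtx G u) (Jc.J (vtx G v)) = 0) ∧
    ((bracket G (Jc.J (vtx G u)) (vtx G v) + bracket G (vtx G u) (Jc.J (vtx G v)) = 0) ↔
      (bracket G (Jc.J (vtx G u)) (vtx G v) = 0 ∧ bracket G (vtx G u) (Jc.J (vtx G v)) = 0)) :=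
  statement1' Jc u v h

end GraphLie
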